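/- Let F be a strategyproof 2-facility mechanism on the line with approximation ratio at most ρ, and let x be an (i|j,k)-well-separated 3-agent instance with F_2(x) = x_k. Then for every x'_k with x_j < x'_k < x_k, the instance x' obtained by replacing x_k with x'_k satisfies F_2(x') = x'_k. -/
import Mathlib


noncomputable section

/-- Cost of an agent at location `a` under a pair of facilities. -/
def fcost (a : ℝ) (y : ℝ × ℝ) : ℝ := min |a - y.1| |a - y.2|

/-- Social cost: sum of the agents' distances to their nearest facility. -/
def scost {n : ℕ} (x : Fin n → ℝ) (y : ℝ × ℝ) : ℝ := ∑ i, fcost (x i) y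

/-- Optimal social cost over all placements of two facilities. -/
def optCost {n : ℕ} (x : Fin n → ℝ) : ℝ := ⨅ y : ℝ × ℝ, scost x y

/-- The mechanism outputs its facilities in increasing order. -/
def Ordered {n : ℕ} (F : (Fin n → ℝ) → ℝ × ℝ) : Prop := ∀ x, (F x).1 ≤ (F x).2

/-- No agent can strictly decrease her cost by misreporting her location. -/
def Strategyproof {n : ℕ} (F : (Fin n → ℝ) → ℝ × ℝ) : Prop :=
  ∀ (x : Fin n → ℝ) (i : Fin n) (y : ℝ),
    fcost (x i) (F x) ≤ fcost (x i) (F (Function.update x i y))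

/-- `F` has approximation ratio (at most) `ρ` for the social cost. -/
def ApproxRatio {n : ℕ} (F : (Fin n → ℝ) → ℝ × ℝ) (ρ : ℝ) : Prop :=
  ∀ x, scost x (F x) ≤ ρ * optCost x

/-- An `(i|j,k)`-well-separated 3-agent instance. -/
def WellSep (ρ : ℝ) (x : Fin 3 → ℝ) (i j k : Fin 3) : Prop :=
  x i < x j ∧ x j < x k ∧ ρ * (x k - x j) < x j - x i

private lemma fcost_pair (v p q : ℝ) : fcost v (p, q) = min |v - p| |v - q| := rfl

private lemma fcost_nonneg (a : ℝ) (y : ℝ × ℝ) : 0 ≤ fcost a y :=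
  le_min (abs_nonneg _) (abs_nonneg _)

private lemma scost_nonneg {n : ℕ} (x : Fin n → ℝ) (y : ℝ × ℝ) : 0 ≤ scost x y :=
  Finset.sum_nonneg fun _ _ => fcost_nonneg _ _

private lemma agent_le_scost {n : ℕ} (x : Fin n → ℝ) (y : ℝ × ℝ) (m : Fin n) :
    fcost (x m) y ≤ scost x y :=
  Finset.single_le_sum (fun _ _ => fcost_nonneg _ _) (Finset.mem_univ m)

private lemma optCost_nonneg {n : ℕ} (x : Fin n → ℝ) : 0 ≤ optCost x :=
  le_ciInf fun y => scost_nonneg x y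

private lemma optCost_le {n : ℕ} (x : Fin n → ℝ) (y : ℝ × ℝ) : optCost x ≤ scost x y :=
  ciInf_le ⟨0, by rintro s ⟨y', rfl⟩; exact scost_nonneg x y'⟩ y

private lemma sum_three (f : Fin 3 → ℝ) (i j k : Fin 3)
    (hij : i ≠ j) (hik : i ≠ k) (hjk : j ≠ k) :
    ∑ m, f m = f i + f j + f k := by
  fin_cases i <;> fin_cases j <;> fin_cases k <;>
    simp_all [Fin.sum_univ_three] <;> ring

private lemma fcost_zero_iff {a : ℝ} {y : ℝ × ℝ} (h : fcost a y = 0) :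
    y.1 = a ∨ y.2 = a := by
  unfold fcost at h
  rcases le_total |a - y.1| |a - y.2| with hc | hc
  · left
    rw [min_eq_left hc] at h
    have := abs_eq_zero.mp h
    linarith
  · right
    rw [min_eq_right hc] at h
    have := abs_eq_zero.mp h
    linarith

/-- If some placement achieves zero social cost, every agent has zero cost under `F`. -/
private lemma cost_zero (F : (Fin 3 → ℝ) → ℝ × ℝ) {ρ : ℝ}
    (happ : ApproxRatio F ρ) (w : Fin 3 → ℝ)
    (hopt : optCost w ≤ 0) (m : Fin 3) : fcost (w m) (F w) = 0 := by
  have h0 : optCost w = 0 := le_antisymm hopt (optCost_nonneg w)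
  have h1 := happ w
  rw [h0, mul_zero] at h1
  exact le_antisymm (le_trans (agent_le_scost w (F w) m) h1) (fcost_nonneg _ _)

/-- The key structural fact: for an `(i|j,k)`-well-separated instance,
`F₁ < y j ≤ F₂ ≤ y k`. -/
private lemma wellsep_fact (F : (Fin 3 → ℝ) → ℝ × ℝ) {ρ : ℝ} (hρ : 1 ≤ ρ)
    (hord : Ordered F) (hsp : Strategyproof F) (happ : ApproxRatio F ρ)
    (y : Fin 3 → ℝ) (i j k : Fin 3)
    (hij : i ≠ j) (hik : i ≠ k) (hjk : j ≠ k)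
    (hws : WellSep ρ y i j k) :
    (F y).1 < y j ∧ y j ≤ (F y).2 ∧ (F y).2 ≤ y k := by
  obtain ⟨hab, hbt, hsep⟩ := hws
  have hρ0 : (0:ℝ) < ρ := by linarith
  have hordy := hord y
  -- Step A : the social cost of F on y is < y j - y i
  have hsAB : scost y (y i, y j) = y k - y j := by
    rw [scost, sum_three _ i j k hij hik hjk]
    have e1 : fcost (y i) (y i, y j) = 0 := by
      rw [fcost_pair, sub_self, abs_zero]
      exact min_eq_left (abs_nonneg _)
    have e2 : fcost (y j) (y i, y j) = 0 := by
      rw [fcost_pair, sub_self, abs_zero]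
      exact min_eq_right (abs_nonneg _)
    have e3 : fcost (y k) (y i, y j) = y k - y j := by
      rw [fcost_pair, abs_of_nonneg (by linarith), abs_of_nonneg (by linarith)]
      exact min_eq_right (by linarith)
    rw [e1, e2, e3]; ring
  have hopt : optCost y ≤ y k - y j := by
    have := optCost_le y (y i, y j)
    rwa [hsAB] at this
  have hscost : scost y (F y) < y j - y i := by
    have h1 := happ y
    have h2 : ρ * optCost y ≤ ρ * (y k - y j) :=
      mul_le_mul_of_nonneg_left hopt (le_of_lt hρ0)
    linarith
  -- agent i's cost
  have hic : fcost (y i) (F y) < y j - y i :=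
    lt_of_le_of_lt (agent_le_scost y (F y) i) hscost
  -- Step D : agent k deviating to y j forces a facility at y j
  have hkdev : fcost (y k) (F y) ≤ y k - y j := by
    have hoptw : optCost (Function.update y k (y j)) ≤ 0 := by
      have hzero : scost (Function.update y k (y j)) (y i, y j) = 0 := by
        rw [scost, sum_three _ i j k hij hik hjk,
          Function.update_of_ne hik, Function.update_of_ne hjk, Function.update_self]
        have e1 : fcost (y i) (y i, y j) = 0 := by
          rw [fcost_pair, sub_self, abs_zero]
          exact min_eq_left (abs_nonneg _)
        have e2 : fcost (y j) (y i, y j) = 0 := by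
          rw [fcost_pair, sub_self, abs_zero]
          exact min_eq_right (abs_nonneg _)
        rw [e1, e2]; ring
      have := optCost_le (Function.update y k (y j)) (y i, y j)
      rwa [hzero] at this
    have hcj : fcost (Function.update y k (y j) j) (F (Function.update y k (y j))) = 0 :=
      cost_zero F happ _ hoptw j
    rw [Function.update_of_ne hjk] at hcj
    have hfac : fcost (y k) (F (Function.update y k (y j))) ≤ y k - y j := by
      rcases fcost_zero_iff hcj with h | h
      · calc fcost (y k) (F (Function.update y k (y j)))
            ≤ |y k - (F (Function.update y k (y j))).1| := min_le_left _ _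
          _ = y k - y j := by rw [h, abs_of_nonneg (by linarith)]
      · calc fcost (y k) (F (Function.update y k (y j)))
            ≤ |y k - (F (Function.update y k (y j))).2| := min_le_right _ _
          _ = y k - y j := by rw [h, abs_of_nonneg (by linarith)]
    exact le_trans (hsp y k (y j)) hfac
  -- Step E : F₂ ≥ y j
  have hf2b : y j ≤ (F y).2 := by
    by_contra hcon
    push_neg at hcon
    have h2' : y k - y j < |y k - (F y).2| := by
      have : y k - (F y).2 ≤ |y k - (F y).2| := le_abs_self _
      linarith
    have h1' : y k - y j < |y k - (F y).1| := by
      have : y k - (F y).1 ≤ |y k - (F y).1| := le_abs_self _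
      linarith
    have : y k - y j < fcost (y k) (F y) := lt_min h1' h2'
    linarith
  -- Step F : F₁ < y j
  have hf1b : (F y).1 < y j := by
    have hA : y j - y i ≤ |y i - (F y).2| := by
      have : (F y).2 - y i ≤ |y i - (F y).2| := by
        rw [abs_sub_comm]; exact le_abs_self _
      linarith
    have hmin : |y i - (F y).1| < y j - y i := by
      unfold fcost at hic
      rcases min_lt_iff.mp hic with h | h
      · exact h
      · linarith
    have : (F y).1 - y i ≤ |y i - (F y).1| := by
      rw [abs_sub_comm]; exact le_abs_self _
    linarith
  -- Step G : F₂ ≤ y k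
  have hf2t : (F y).2 ≤ y k := by
    by_contra hcon
    push_neg at hcon
    -- agent j deviating to y k forces a facility at y k
    have hoptw' : optCost (Function.update y j (y k)) ≤ 0 := by
      have hzero : scost (Function.update y j (y k)) (y i, y k) = 0 := by
        rw [scost, sum_three _ i j k hij hik hjk,
          Function.update_of_ne hij, Function.update_of_ne (Ne.symm hjk), Function.update_self]
        have e1 : fcost (y i) (y i, y k) = 0 := by
          rw [fcost_pair, sub_self, abs_zero]
          exact min_eq_left (abs_nonneg _)
        have e2 : fcost (y k) (y i, y k) = 0 := by
          rw [fcost_pair, sub_self, abs_zero]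
          exact min_eq_right (abs_nonneg _)
        rw [e1, e2]; ring
      have := optCost_le (Function.update y j (y k)) (y i, y k)
      rwa [hzero] at this
    have hcj' : fcost (Function.update y j (y k) j) (F (Function.update y j (y k))) = 0 :=
      cost_zero F happ _ hoptw' j
    rw [Function.update_self] at hcj'
    have hfac' : fcost (y j) (F (Function.update y j (y k))) ≤ y k - y j := by
      rcases fcost_zero_iff hcj' with h | h
      · calc fcost (y j) (F (Function.update y j (y k)))
            ≤ |y j - (F (Function.update y j (y k))).1| := min_le_left _ _
          _ = y k - y j := by rw [h, abs_sub_comm, abs_of_nonneg (by linarith)]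
      · calc fcost (y j) (F (Function.update y j (y k)))
            ≤ |y j - (F (Function.update y j (y k))).2| := min_le_right _ _
          _ = y k - y j := by rw [h, abs_sub_comm, abs_of_nonneg (by linarith)]
    have hjdev : fcost (y j) (F y) ≤ y k - y j := le_trans (hsp y j (y k)) hfac'
    -- now derive a contradiction with the social cost bound
    have hB2 : y k - y j < |y j - (F y).2| := by
      have : (F y).2 - y j ≤ |y j - (F y).2| := by
        rw [abs_sub_comm]; exact le_abs_self _
      linarith
    have hB1 : |y j - (F y).1| ≤ y k - y j := by
      unfold fcost at hjdev
      rcases min_le_iff.mp hjdev with h | h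
      · exact h
      · linarith
    have hb1 : |y j - (F y).1| = y j - (F y).1 := abs_of_nonneg (by linarith)
    have hjc : fcost (y j) (F y) = y j - (F y).1 := by
      unfold fcost
      rw [hb1]
      exact min_eq_left (by linarith)
    have hicge : (F y).1 - y i ≤ fcost (y i) (F y) := by
      unfold fcost
      apply le_min
      · rw [abs_sub_comm]; exact le_abs_self _
      · have : (F y).2 - y i ≤ |y i - (F y).2| := by
          rw [abs_sub_comm]; exact le_abs_self _
        linarith
    have hkc := fcost_nonneg (y k) (F y)
    have hsum : scost y (F y)
        = fcost (y i) (F y) + fcost (y j) (F y) + fcost (y k) (F y) := by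
      rw [scost, sum_three _ i j k hij hik hjk]
    rw [hjc] at hsum
    linarith
  exact ⟨hf1b, hf2b, hf2t⟩

/-- Proposition `c_pushes_b`: if `x` is `(i|j,k)`-well-separated and the
rightmost facility is at `x_k`, then moving agent `k` to any `x'_k` with
`x_j < x'_k < x_k` keeps the rightmost facility at agent `k`'s location. -/
theorem c_pushes_b (F : (Fin 3 → ℝ) → ℝ × ℝ) (ρ : ℝ) (hρ : 1 ≤ ρ)
    (hord : Ordered F) (hsp : Strategyproof F) (happ : ApproxRatio F ρ)
    (x : Fin 3 → ℝ) (i j k : Fin 3)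
    (hij : i ≠ j) (hik : i ≠ k) (hjk : j ≠ k)
    (hws : WellSep ρ x i j k) (hF : (F x).2 = x k)
    (x'k : ℝ) (h1 : x j < x'k) (h2 : x'k < x k) :
    (F (Function.update x k x'k)).2 = x'k := by
  obtain ⟨hab, hbc, hsep⟩ := hws
  have hρ0 : (0:ℝ) < ρ := by linarith
  -- well-separatedness of all the moved instances
  have hwsz : ∀ s : ℝ, x j < s → s ≤ x k → WellSep ρ (Function.update x k s) i j k := by
    intro s hs1 hs2
    unfold WellSep
    rw [Function.update_of_ne hik, Function.update_of_ne hjk, Function.update_self]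
    refine ⟨hab, hs1, ?_⟩
    have : ρ * (s - x j) ≤ ρ * (x k - x j) :=
      mul_le_mul_of_nonneg_left (by linarith) (le_of_lt hρ0)
    linarith
  -- cross strategyproofness among k-deviations
  have hcross : ∀ s s' : ℝ,
      fcost s (F (Function.update x k s)) ≤ |s - (F (Function.update x k s')).2| := by
    intro s s'
    have h := hsp (Function.update x k s) k s'
    rw [Function.update_idem] at h
    rw [Function.update_self] at h
    exact h.trans (min_le_right _ _)
  -- structural facts at x'k
  have hu := wellsep_fact F hρ hord hsp happ (Function.update x k x'k) i j k hij hik hjk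
      (hwsz x'k h1 (le_of_lt h2))
  rw [Function.update_of_ne hjk, Function.update_self] at hu
  obtain ⟨hu1, hu2, hu3⟩ := hu
  by_contra hne
  have hlt : (F (Function.update x k x'k)).2 < x'k := lt_of_le_of_ne hu3 hne
  set c0 : ℝ := x'k - (F (Function.update x k x'k)).2 with hc0
  clear_value c0
  have hc0pos : 0 < c0 := by linarith
  have hjc0 : x j ≤ x'k - c0 := by linarith
  -- the cost of agent k in the instance x' is exactly c0
  have hgu : fcost x'k (F (Function.update x k x'k)) = c0 := by
    have hordu := hord (Function.update x k x'k)
    rw [hc0]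
    unfold fcost
    rw [abs_of_nonneg (by linarith), abs_of_nonneg (by linarith)]
    exact min_eq_right (by linarith)
  -- the set of second facilities above the gap
  set S : Set ℝ := {p | ∃ s, x j < s ∧ s ≤ x k ∧ (F (Function.update x k s)).2 = p ∧
      x'k - c0 < p} with hS
  have hcS : x k ∈ S := by
    refine ⟨x k, hbc, le_refl _, ?_, by linarith⟩
    rw [Function.update_eq_self, hF]
  have hSlb : ∀ p ∈ S, x'k + c0 ≤ p := by
    rintro p ⟨s, hs1, hs2, hs3, hs4⟩
    have h := hcross x'k s
    rw [hgu, hs3] at h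
    rcases le_abs.mp h with h' | h'
    · linarith
    · linarith
  have hbddS : BddBelow S := ⟨x'k + c0, fun p hp => hSlb p hp⟩
  set B : ℝ := sInf S with hB
  clear_value B
  have hB1 : x'k + c0 ≤ B := by rw [hB]; exact le_csInf ⟨x k, hcS⟩ hSlb
  have hB2 : B ≤ x k := by rw [hB]; exact csInf_le hbddS hcS
  set γ : ℝ := B - (x'k - c0) with hγ
  clear_value γ
  have hγpos : 0 < γ := by linarith
  -- pick an element of S close to its infimum
  obtain ⟨β, hβS, hβlt⟩ : ∃ β ∈ S, β < B + γ / 4 := by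
    refine (csInf_lt_iff hbddS ⟨x k, hcS⟩).mp ?_
    rw [← hB]; linarith
  have hβge : B ≤ β := by rw [hB]; exact csInf_le hbddS hβS
  -- the test location t
  set t : ℝ := B - γ / 4 with ht
  clear_value t
  have htb : x j < t := by linarith
  have htc : t ≤ x k := by linarith
  have hft := wellsep_fact F hρ hord hsp happ (Function.update x k t) i j k hij hik hjk
      (hwsz t htb htc)
  rw [Function.update_of_ne hjk, Function.update_self] at hft
  obtain ⟨ht1, ht2, ht3⟩ := hft
  -- the second facility at instance t lies below the gap
  have htle : (F (Function.update x k t)).2 ≤ x'k - c0 := by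
    by_contra hcon
    push_neg at hcon
    have hmem : (F (Function.update x k t)).2 ∈ S := ⟨t, htb, htc, rfl, hcon⟩
    have hle := csInf_le hbddS hmem
    rw [← hB] at hle
    linarith
  -- lower bound on the cost of agent k at instance t
  have hgt_lb : t - (x'k - c0) ≤ fcost t (F (Function.update x k t)) := by
    unfold fcost
    apply le_min
    · have : t - (F (Function.update x k t)).1 ≤ |t - (F (Function.update x k t)).1| :=
        le_abs_self _
      linarith
    · have : t - (F (Function.update x k t)).2 ≤ |t - (F (Function.update x k t)).2| :=
        le_abs_self _
      linarith
  -- upper bound via the deviation to the witness of β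
  obtain ⟨s, hs1, hs2, hs3, hs4⟩ := hβS
  have hup : fcost t (F (Function.update x k t)) ≤ |t - β| := by
    rw [← hs3]; exact hcross t s
  have habs : |t - β| = β - t := by
    rw [abs_sub_comm]
    exact abs_of_nonneg (by linarith)
  rw [habs] at hup
  linarith
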